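/- Let E be a real Banach space, let e : ℝ → E be continuous, and let t, h ∈ ℝ with h ≥ 0. Then −(1/12) ∫₀^h ( ∫₀^ζ ξ ( ∫₀^ξ ( e(t+ξ) − e(t+ν) ) dν ) dξ ) dζ = (1/72) ∫₀^h ( 8ζ³ − 9hζ² + h³ ) e(t+ζ) dζ. -/

import Mathlib

open intervalIntegral MeasureTheory

section Aux

variable {E : Type*} [NormedAddCommGroup E] [NormedSpace ℝ E] [CompleteSpace E]

lemma prim_hasDerivAt (f : ℝ → E) (hf : Continuous f) (x : ℝ) :
    HasDerivAt (fun y => ∫ s in (0:ℝ)..y, f s) (f x) x :=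
  intervalIntegral.integral_hasDerivAt_right (hf.intervalIntegrable _ _)
    (hf.stronglyMeasurableAtFilter _ _) hf.continuousAt

lemma prim_continuous (f : ℝ → E) (hf : Continuous f) :
    Continuous (fun y => ∫ s in (0:ℝ)..y, f s) :=
  continuous_iff_continuousAt.2 fun x => (prim_hasDerivAt f hf x).continuousAt

lemma parts (f : ℝ → E) (hf : Continuous f) (u u' : ℝ → ℝ)
    (hu : ∀ x, HasDerivAt u (u' x) x) (huc : Continuous u) (hu' : Continuous u') (b : ℝ) :
    ∫ x in (0:ℝ)..b, u' x • (∫ s in (0:ℝ)..x, f s)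
      = u b • (∫ s in (0:ℝ)..b, f s) - ∫ x in (0:ℝ)..b, u x • f x := by
  have hF := prim_continuous f hf
  have key : ∀ x ∈ Set.uIcc (0:ℝ) b,
      HasDerivAt (fun y => u y • ∫ s in (0:ℝ)..y, f s)
        (u' x • (∫ s in (0:ℝ)..x, f s) + u x • f x) x :=
    fun x _ => ((hu x).smul (prim_hasDerivAt f hf x)).congr_deriv (add_comm _ _)
  have hint : IntervalIntegrable
      (fun x => u' x • (∫ s in (0:ℝ)..x, f s) + u x • f x) volume 0 b :=
    ((hu'.smul hF).add (huc.smul hf)).intervalIntegrable _ _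
  have h := intervalIntegral.integral_eq_sub_of_hasDerivAt key hint
  rw [intervalIntegral.integral_add (f := fun x => u' x • ∫ s in (0:ℝ)..x, f s)
    (g := fun x => u x • f x) ((hu'.smul hF).intervalIntegrable _ _)
    ((huc.smul hf).intervalIntegrable _ _)] at h
  simp only [intervalIntegral.integral_same, smul_zero] at h
  rw [sub_zero] at h
  rw [eq_sub_iff_add_eq]
  exact h

end Aux

theorem p2_integral_reduction {E : Type*} [NormedAddCommGroup E] [NormedSpace ℝ E]
    [CompleteSpace E] (e : ℝ → E) (he : Continuous e) (t h : ℝ) (hh : 0 ≤ h) :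
    (-(1 / 12 : ℝ)) •
        (∫ ζ in (0:ℝ)..h, ∫ ξ in (0:ℝ)..ζ, ξ • ∫ ν in (0:ℝ)..ξ, (e (t + ξ) - e (t + ν)))
      = (1 / 72 : ℝ) • ∫ ζ in (0:ℝ)..h, (8 * ζ ^ 3 - 9 * h * ζ ^ 2 + h ^ 3) • e (t + ζ) := by
  have hf : Continuous (fun s : ℝ => e (t + s)) := he.comp (continuous_const.add continuous_id)
  have hFc : Continuous (fun x : ℝ => ∫ s in (0:ℝ)..x, e (t + s)) := prim_continuous _ hf
  have hgc : Continuous (fun ξ : ℝ => ((3/2 : ℝ) * ξ ^ 2) • e (t + ξ)) :=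
    (continuous_const.mul (continuous_pow 2)).smul hf
  have hGc : Continuous (fun x : ℝ => ∫ ξ in (0:ℝ)..x, ((3/2 : ℝ) * ξ ^ 2) • e (t + ξ)) :=
    prim_continuous _ hgc
  -- inner integral
  have h1 : ∀ ξ : ℝ, (∫ ν in (0:ℝ)..ξ, (e (t + ξ) - e (t + ν)))
      = ξ • e (t + ξ) - ∫ s in (0:ℝ)..ξ, e (t + s) := by
    intro ξ
    rw [intervalIntegral.integral_sub intervalIntegrable_const (hf.intervalIntegrable _ _),
      intervalIntegral.integral_const]
    simp
  -- middle integral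
  have h3 : ∀ ζ : ℝ, (∫ ξ in (0:ℝ)..ζ, ξ • (∫ ν in (0:ℝ)..ξ, (e (t + ξ) - e (t + ν))))
      = (∫ ξ in (0:ℝ)..ζ, ((3/2 : ℝ) * ξ ^ 2) • e (t + ξ))
        - (ζ ^ 2 / 2) • ∫ s in (0:ℝ)..ζ, e (t + s) := by
    intro ζ
    have e1 : ∀ ξ : ℝ, ξ • (∫ ν in (0:ℝ)..ξ, (e (t + ξ) - e (t + ν)))
        = (ξ * ξ) • e (t + ξ) - ξ • ∫ s in (0:ℝ)..ξ, e (t + s) := by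
      intro ξ; rw [h1, smul_sub, smul_smul]
    rw [intervalIntegral.integral_congr (g := fun ξ =>
      (ξ * ξ) • e (t + ξ) - ξ • ∫ s in (0:ℝ)..ξ, e (t + s)) (fun ξ _ => e1 ξ)]
    have hc1 : Continuous (fun ξ : ℝ => (ξ * ξ) • e (t + ξ)) :=
      (continuous_id.mul continuous_id).smul hf
    have hc2 : Continuous (fun ξ : ℝ => ξ • ∫ s in (0:ℝ)..ξ, e (t + s)) :=
      continuous_id.smul hFc
    rw [intervalIntegral.integral_sub (hc1.intervalIntegrable _ _) (hc2.intervalIntegrable _ _)]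
    have hP : ∀ x : ℝ, HasDerivAt (fun y : ℝ => y ^ 2 / 2) x x := fun x =>
      ((hasDerivAt_pow 2 x).div_const 2).congr_deriv (by ring)
    have hparts := parts (fun s => e (t + s)) hf (fun y => y ^ 2 / 2) (fun y => y) hP
      ((continuous_pow 2).div_const 2) continuous_id ζ
    rw [hparts]
    have hc3 : Continuous (fun ξ : ℝ => (ξ ^ 2 / 2) • e (t + ξ)) :=
      ((continuous_pow 2).div_const 2).smul hf
    rw [show ∀ A B C : E, A - (C - B) = (A + B) - C from fun A B C => by abel]
    rw [← intervalIntegral.integral_add (hc1.intervalIntegrable _ _)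
      (hc3.intervalIntegrable _ _)]
    congr 1
    apply intervalIntegral.integral_congr
    intro ξ _
    show (ξ * ξ) • e (t + ξ) + (ξ ^ 2 / 2) • e (t + ξ) = ((3/2 : ℝ) * ξ ^ 2) • e (t + ξ)
    rw [← add_smul]
    congr 1
    ring
  -- outer integral
  rw [intervalIntegral.integral_congr (g := fun ζ =>
    (∫ ξ in (0:ℝ)..ζ, ((3/2 : ℝ) * ξ ^ 2) • e (t + ξ))
      - (ζ ^ 2 / 2) • ∫ s in (0:ℝ)..ζ, e (t + s)) (fun ζ _ => h3 ζ)]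
  have hc4 : Continuous (fun ζ : ℝ => (ζ ^ 2 / 2) • ∫ s in (0:ℝ)..ζ, e (t + s)) :=
    ((continuous_pow 2).div_const 2).smul hFc
  rw [intervalIntegral.integral_sub (hGc.intervalIntegrable _ _) (hc4.intervalIntegrable _ _)]
  -- part A : ∫ G
  have hA : (∫ ζ in (0:ℝ)..h, ∫ ξ in (0:ℝ)..ζ, ((3/2 : ℝ) * ξ ^ 2) • e (t + ξ))
      = - ∫ ζ in (0:ℝ)..h, (ζ - h) • (((3/2 : ℝ) * ζ ^ 2) • e (t + ζ)) := by
    have hu : ∀ x : ℝ, HasDerivAt (fun y : ℝ => y - h) (1 : ℝ) x := fun x =>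
      (hasDerivAt_id x).sub_const h
    have hp := parts (fun ξ => ((3/2 : ℝ) * ξ ^ 2) • e (t + ξ)) hgc
      (fun y => y - h) (fun _ => (1:ℝ)) hu (continuous_id.sub continuous_const)
      continuous_const h
    simp only [one_smul, sub_self, zero_smul, zero_sub] at hp
    exact hp
  -- part B
  have hB : (∫ ζ in (0:ℝ)..h, (ζ ^ 2 / 2) • ∫ s in (0:ℝ)..ζ, e (t + s))
      = - ∫ ζ in (0:ℝ)..h, ((ζ ^ 3 - h ^ 3) / 6) • e (t + ζ) := by
    have hu : ∀ x : ℝ, HasDerivAt (fun y : ℝ => (y ^ 3 - h ^ 3) / 6) (x ^ 2 / 2) x := fun x =>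
      (((hasDerivAt_pow 3 x).sub_const (h ^ 3)).div_const 6).congr_deriv (by ring)
    have hp := parts (fun s => e (t + s)) hf (fun y => (y ^ 3 - h ^ 3) / 6)
      (fun y => y ^ 2 / 2) hu
      (((continuous_pow 3).sub continuous_const).div_const 6)
      ((continuous_pow 2).div_const 2) h
    simp only [sub_self, zero_div, zero_smul, zero_sub] at hp
    exact hp
  rw [hA, hB]
  have hc5 : Continuous (fun ζ : ℝ => (ζ - h) • (((3/2 : ℝ) * ζ ^ 2) • e (t + ζ))) :=
    (continuous_id.sub continuous_const).smul hgc
  have hc6 : Continuous (fun ζ : ℝ => ((ζ ^ 3 - h ^ 3) / 6) • e (t + ζ)) :=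
    (((continuous_pow 3).sub continuous_const).div_const 6).smul hf
  rw [show ∀ A B : E, -A - -B = B - A from fun A B => by abel]
  rw [← intervalIntegral.integral_sub (hc6.intervalIntegrable _ _) (hc5.intervalIntegrable _ _)]
  rw [← intervalIntegral.integral_smul, ← intervalIntegral.integral_smul]
  apply intervalIntegral.integral_congr
  intro ζ _
  show (-(1 / 12 : ℝ)) • (((ζ ^ 3 - h ^ 3) / 6) • e (t + ζ)
      - (ζ - h) • (((3/2 : ℝ) * ζ ^ 2) • e (t + ζ)))
    = (1 / 72 : ℝ) • ((8 * ζ ^ 3 - 9 * h * ζ ^ 2 + h ^ 3) • e (t + ζ))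
  simp only [smul_sub, smul_smul]
  rw [← sub_smul]
  congr 1
  ring
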